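/- For the Suslov system with I₁₃ = I₂₃ = 0, the system ẋᵢ = γ₃{xᵢ, E} is satisfied, where E = ½(I₁₁ω₁² + I₂₂ω₂²) + b₁γ₁ + b₂γ₂ + b₃γ₃ and the bracket is defined by {ω₁, γ₂} = −1/I₁₁, {ω₂, γ₁} = 1/I₂₂, {ω₁, γ₃} = γ₂/(I₁₁γ₃), {ω₂, γ₃} = −γ₁/(I₂₂γ₃) (all other basic brackets zero, extended by the Leibniz rule and antisymmetry). Moreover, F₁ = γ₁² + γ₂² + γ₃² has zero bracket with every coordinate function (it is a Casimir). -/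

import Mathlib

set_option maxHeartbeats 1000000

lemma coord_hasFDerivAt (i : Fin 5) (x : Fin 5 → ℝ) :
    HasFDerivAt (fun x : Fin 5 → ℝ => x i) (ContinuousLinearMap.proj (R := ℝ) i) x :=
  (ContinuousLinearMap.proj i : (Fin 5 → ℝ) →L[ℝ] ℝ).hasFDerivAt

theorem suslov_conformally_hamiltonian
    (I11 I22 b1 b2 b3 : ℝ) (hI11 : 0 < I11) (hI22 : 0 < I22)
    (v : (Fin 5 → ℝ) → (Fin 5 → ℝ))
    (hv : v = fun x => ![(b3 * x 3 - b2 * x 4) / I11,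
                          (b1 * x 4 - b3 * x 2) / I22,
                          -x 4 * x 1,
                          x 4 * x 0,
                          x 2 * x 1 - x 3 * x 0])
    (J : (Fin 5 → ℝ) → Matrix (Fin 5) (Fin 5) ℝ)
    (hJ : J = fun x =>
      !![0, 0, 0, -(1 / I11), x 3 / (I11 * x 4);
         0, 0, 1 / I22, 0, -(x 2 / (I22 * x 4));
         0, -(1 / I22), 0, 0, 0;
         1 / I11, 0, 0, 0, 0;
         -(x 3 / (I11 * x 4)), x 2 / (I22 * x 4), 0, 0, 0])
    (E : (Fin 5 → ℝ) → ℝ)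
    (hE : E = fun x => (1 / 2) * (I11 * x 0 ^ 2 + I22 * x 1 ^ 2)
      + b1 * x 2 + b2 * x 3 + b3 * x 4)
    (F1 : (Fin 5 → ℝ) → ℝ)
    (hF1 : F1 = fun x => x 2 ^ 2 + x 3 ^ 2 + x 4 ^ 2) :
    ∀ x : Fin 5 → ℝ, x 4 ≠ 0 →
      (∀ i, v x i = x 4 * ∑ j, J x i j * fderiv ℝ E x (Pi.single j 1)) ∧
      (∀ i, ∑ j, J x j i * fderiv ℝ F1 x (Pi.single j 1) = 0) := by
  intro x hx
  have sq2 : ∀ j : Fin 5,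
      HasFDerivAt (fun y : Fin 5 → ℝ => y j ^ 2)
        (x j • ContinuousLinearMap.proj (R := ℝ) j
          + x j • ContinuousLinearMap.proj (R := ℝ) j) x := by
    intro j
    simp only [pow_two]; exact (coord_hasFDerivAt j x).mul (coord_hasFDerivAt j x)
  have hEd : HasFDerivAt E
      ((1/2 : ℝ) • (I11 • (x 0 • ContinuousLinearMap.proj (R := ℝ) 0
          + x 0 • ContinuousLinearMap.proj (R := ℝ) 0)
        + I22 • (x 1 • ContinuousLinearMap.proj (R := ℝ) 1
          + x 1 • ContinuousLinearMap.proj (R := ℝ) 1))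
        + b1 • ContinuousLinearMap.proj (R := ℝ) 2
        + b2 • ContinuousLinearMap.proj (R := ℝ) 3
        + b3 • ContinuousLinearMap.proj (R := ℝ) 4) x := by
    rw [hE]
    exact (((((sq2 0).const_mul I11).add ((sq2 1).const_mul I22)).const_mul (1/2)).add
        ((coord_hasFDerivAt 2 x).const_mul b1)).add
        ((coord_hasFDerivAt 3 x).const_mul b2) |>.add
        ((coord_hasFDerivAt 4 x).const_mul b3)
  have hF1d : HasFDerivAt F1
      ((x 2 • ContinuousLinearMap.proj (R := ℝ) 2
          + x 2 • ContinuousLinearMap.proj (R := ℝ) 2)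
        + (x 3 • ContinuousLinearMap.proj (R := ℝ) 3
          + x 3 • ContinuousLinearMap.proj (R := ℝ) 3)
        + (x 4 • ContinuousLinearMap.proj (R := ℝ) 4
          + x 4 • ContinuousLinearMap.proj (R := ℝ) 4)) x := by
    rw [hF1]
    exact ((sq2 2).add (sq2 3)).add (sq2 4)
  have hDE : ∀ j : Fin 5, fderiv ℝ E x (Pi.single j 1)
      = ![I11 * x 0, I22 * x 1, b1, b2, b3] j := by
    intro j
    rw [hEd.fderiv]
    fin_cases j <;>
      simp [ContinuousLinearMap.proj_apply, Pi.single_apply] <;> ring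
  have hDF : ∀ j : Fin 5, fderiv ℝ F1 x (Pi.single j 1)
      = ![0, 0, 2 * x 2, 2 * x 3, 2 * x 4] j := by
    intro j
    rw [hF1d.fderiv]
    fin_cases j <;>
      simp [ContinuousLinearMap.proj_apply, Pi.single_apply] <;> ring
  have hI11' := hI11.ne'
  have hI22' := hI22.ne'
  clear hEd hF1d sq2 hE hF1
  subst hv hJ
  constructor <;> intro i <;> fin_cases i <;>
    simp only [Fin.sum_univ_five, hDE, hDF, Matrix.cons_val_zero, Matrix.cons_val_one,
      Matrix.cons_val', Matrix.head_cons, Matrix.head_fin_const, Matrix.cons_val_fin_one,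
      Matrix.empty_val', Matrix.cons_val_two, Matrix.cons_val_three, Matrix.cons_val_four,
      Matrix.tail_cons, Matrix.of_apply, Fin.isValue, Fin.zero_eta, Fin.mk_one, Fin.reduceFinMk] <;>
    field_simp <;> ring
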